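/- A finite family of nonnegative d×d matrices is eventually positive (there exists k such that all products of length r ≥ k are entrywise positive) if and only if no matrix of the family has a zero row or a zero column, and there exists k such that all products of length exactly k are entrywise positive. -/

import Mathlib

/-- The product of length `k` of matrices from the family `A`. -/
noncomputable def prodMat {d m : ℕ} (A : Fin m → Matrix (Fin d) (Fin d) ℝ)
    (k : ℕ) (w : Fin k → Fin m) : Matrix (Fin d) (Fin d) ℝ :=
  (List.ofFn fun i => A (w i)).prod

private lemma mul_entry_nonneg {d : ℕ} {P Q : Matrix (Fin d) (Fin d) ℝ}
    (hP : ∀ p q, 0 ≤ P p q) (hQ : ∀ p q, 0 ≤ Q p q) :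
    ∀ p q, 0 ≤ (P * Q) p q := by
  intro p q
  rw [Matrix.mul_apply]
  exact Finset.sum_nonneg fun t _ => mul_nonneg (hP _ _) (hQ _ _)

private lemma mul_entry_pos {d : ℕ} {P Q : Matrix (Fin d) (Fin d) ℝ}
    (hP : ∀ p q, 0 ≤ P p q) (hQ : ∀ p q, 0 ≤ Q p q) {p j q : Fin d}
    (h1 : 0 < P p j) (h2 : 0 < Q j q) : 0 < (P * Q) p q := by
  rw [Matrix.mul_apply]
  refine lt_of_lt_of_le (mul_pos h1 h2) ?_
  exact Finset.single_le_sum (f := fun t => P p t * Q t q)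
    (fun t _ => mul_nonneg (hP _ _) (hQ _ _)) (Finset.mem_univ j)

private lemma list_prod_good {d : ℕ} (L : List (Matrix (Fin d) (Fin d) ℝ))
    (h : ∀ M ∈ L, (∀ p q, 0 ≤ M p q) ∧ (∀ p, ∃ q, 0 < M p q)) :
    (∀ p q, 0 ≤ L.prod p q) ∧ (∀ p, ∃ q, 0 < L.prod p q) := by
  induction L with
  | nil =>
      constructor
      · intro p q
        simp [Matrix.one_apply]
        split <;> norm_num
      · intro p
        exact ⟨p, by simp [Matrix.one_apply]⟩
  | cons M L ih =>
      obtain ⟨ih1, ih2⟩ := ih (fun N hN => h N (List.mem_cons_of_mem _ hN))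
      obtain ⟨hM1, hM2⟩ := h M List.mem_cons_self
      rw [List.prod_cons]
      refine ⟨mul_entry_nonneg hM1 ih1, ?_⟩
      intro p
      obtain ⟨j, hj⟩ := hM2 p
      obtain ⟨q, hq⟩ := ih2 j
      exact ⟨q, mul_entry_pos hM1 ih1 hj hq⟩

private lemma prodMat_nonneg {d m : ℕ} (A : Fin m → Matrix (Fin d) (Fin d) ℝ)
    (hnonneg : ∀ i p q, 0 ≤ A i p q) (k : ℕ) (w : Fin k → Fin m) :
    ∀ p q, 0 ≤ prodMat A k w p q := by
  induction k with
  | zero =>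
      intro p q
      simp [prodMat, Matrix.one_apply]
      split <;> norm_num
  | succ n ih =>
      intro p q
      rw [prodMat, List.ofFn_succ, List.prod_cons]
      exact mul_entry_nonneg (hnonneg _) (ih (fun i => w i.succ)) p q

/-- a finite family of nonnegative matrices is eventually positive
(all products of length `r ≥ k` are entrywise positive, for some `k`) if and only if no
matrix of the family has a zero row or a zero column, and there is a `k` such that all
products of length exactly `k` are entrywise positive. -/
theorem eventually_positive_iff
    {d m : ℕ} (A : Fin m → Matrix (Fin d) (Fin d) ℝ)
    (hnonneg : ∀ i p q, 0 ≤ A i p q) :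
    (∃ k : ℕ, ∀ r : ℕ, k ≤ r → ∀ w : Fin r → Fin m, ∀ p q, 0 < prodMat A r w p q) ↔
      ((∀ i, (∀ p, ∃ q, A i p q ≠ 0) ∧ (∀ q, ∃ p, A i p q ≠ 0)) ∧
        ∃ k : ℕ, ∀ w : Fin k → Fin m, ∀ p q, 0 < prodMat A k w p q) := by
  constructor
  · rintro ⟨k, hk⟩
    constructor
    · intro i
      constructor
      · -- no zero row
        intro p
        by_contra hz
        push_neg at hz
        have hpos := hk (k + 1) (Nat.le_succ k) (fun _ => i) p p
        rw [prodMat, List.ofFn_succ, List.prod_cons, Matrix.mul_apply] at hpos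
        have : ∀ t ∈ Finset.univ, A i p t *
            (List.ofFn fun j : Fin k => A i).prod t p = 0 := by
          intro t _
          rw [hz t, zero_mul]
        rw [Finset.sum_eq_zero this] at hpos
        exact lt_irrefl _ hpos
      · -- no zero column
        intro q
        by_contra hz
        push_neg at hz
        have hpos := hk (k + 1) (Nat.le_succ k) (fun _ => i) q q
        rw [prodMat, List.ofFn_add, List.prod_append] at hpos
        simp only [List.ofFn_succ, List.ofFn_zero, List.prod_cons, List.prod_nil, mul_one] at hpos
        rw [Matrix.mul_apply] at hpos
        have : ∀ t ∈ Finset.univ,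
            (List.ofFn fun j : Fin k => A i).prod q t * A i t q = 0 := by
          intro t _
          rw [hz t, mul_zero]
        rw [Finset.sum_eq_zero this] at hpos
        exact lt_irrefl _ hpos
    · exact ⟨k, fun w => hk k le_rfl w⟩
  · rintro ⟨hrows, k, hk⟩
    refine ⟨k, fun r hr w p q => ?_⟩
    obtain ⟨a, rfl⟩ : ∃ a, r = a + k := ⟨r - k, by omega⟩
    rw [prodMat, List.ofFn_add, List.prod_append]
    -- the prefix has nonneg entries and no zero row
    have hpre := list_prod_good (List.ofFn fun i : Fin a => A (w (Fin.castAdd k i)))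
      (by
        intro M hM
        rw [List.mem_ofFn] at hM
        obtain ⟨i, rfl⟩ := hM
        refine ⟨hnonneg _, fun p => ?_⟩
        obtain ⟨q, hq⟩ := (hrows _).1 p
        exact ⟨q, lt_of_le_of_ne (hnonneg _ _ _) (Ne.symm hq)⟩)
    obtain ⟨hpre1, hpre2⟩ := hpre
    obtain ⟨j, hj⟩ := hpre2 p
    have hsufpos := hk (fun i => w (Fin.natAdd a i)) j q
    have hsufnn := prodMat_nonneg A hnonneg k (fun i => w (Fin.natAdd a i))
    rw [prodMat] at hsufpos hsufnn
    exact mul_entry_pos hpre1 hsufnn hj hsufpos
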